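/- Let S be a set of prime numbers and let s be a real number with s > 1. Let ω(m) denote the number of distinct prime factors of a positive integer m. Then the family m ↦ 2^{ω(m)} / m^s, indexed by the positive integers m all of whose prime factors lie in S, is summable, and its sum equals the (convergent) infinite product over all primes p in S of (1 + p^{-s}) / (1 - p^{-s}). -/

import Mathlib

open Finset

/-- `2^{ω m} ≤ d(m)` for `m ≠ 0`. -/
lemma two_pow_omega_le_card_divisors {m : ℕ} (hm : m ≠ 0) :
    2 ^ m.primeFactors.card ≤ m.divisors.card := by
  rw [Nat.card_divisors hm, ← Finset.prod_const]
  refine Finset.prod_le_prod' ?_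
  intro p hp
  have : m.factorization p ≠ 0 := by
    simp only [Finset.mem_coe, Nat.mem_primeFactors] at hp
    exact (Nat.Prime.factorization_pos_of_dvd hp.1 hm hp.2.1).ne'
  omega

lemma card_divisorsAntidiagonal (m : ℕ) : m.divisorsAntidiagonal.card = m.divisors.card := by
  rw [← Nat.image_fst_divisorsAntidiagonal]
  refine (Finset.card_image_of_injOn ?_).symm
  intro x hx y hy hxy
  rw [Finset.mem_coe, Nat.mem_divisorsAntidiagonal] at hx hy
  have h1 : x.1 ≠ 0 := by rintro h; simp [h] at hx; omega
  ext
  · exact hxy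
  · have := hx.1.trans hy.1.symm
    rw [hxy] at this
    exact Nat.eq_of_mul_eq_mul_left (Nat.pos_of_ne_zero (hxy ▸ h1)) this

lemma aux_summable (s : ℝ) (hs : 1 < s) :
    Summable (fun m : ℕ => (2:ℝ) ^ m.primeFactors.card * (m:ℝ) ^ (-s)) := by
  have hx : Summable (fun n : ℕ => (n:ℝ) ^ (-s)) :=
    Real.summable_nat_rpow.mpr (by linarith)
  have hF : Summable (fun x : ℕ × ℕ => (x.1:ℝ) ^ (-s) * (x.2:ℝ) ^ (-s)) :=
    hx.mul_of_nonneg hx (fun n => Real.rpow_nonneg n.cast_nonneg _)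
      (fun n => Real.rpow_nonneg n.cast_nonneg _)
  set F : ℕ × ℕ → ℝ := fun x => (x.1:ℝ) ^ (-s) * (x.2:ℝ) ^ (-s) with hFdef
  have hFnn : ∀ x, 0 ≤ F x := fun x =>
    mul_nonneg (Real.rpow_nonneg (Nat.cast_nonneg _) _) (Real.rpow_nonneg (Nat.cast_nonneg _) _)
  refine summable_of_sum_range_le (c := ∑' x, F x)
    (fun n => mul_nonneg (by positivity) (Real.rpow_nonneg n.cast_nonneg _)) (fun N => ?_)
  calc ∑ m ∈ range N, (2:ℝ) ^ m.primeFactors.card * (m:ℝ) ^ (-s)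
      ≤ ∑ m ∈ range N, ∑ x ∈ m.divisorsAntidiagonal, F x := by
        refine Finset.sum_le_sum fun m _ => ?_
        rcases eq_or_ne m 0 with rfl | hm
        · have h0 : (0:ℝ) ^ (-s) = 0 := Real.zero_rpow (by linarith : -s ≠ 0)
          simp [h0, Nat.divisorsAntidiagonal_zero]
        · have hsum : ∑ x ∈ m.divisorsAntidiagonal, F x
              = (m.divisorsAntidiagonal.card : ℝ) * (m:ℝ) ^ (-s) := by
            rw [Finset.sum_congr rfl (fun x hx => ?_), Finset.sum_const, nsmul_eq_mul]
            rw [Nat.mem_divisorsAntidiagonal] at hx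
            rw [hFdef]
            have : ((m:ℝ)) = (x.1 : ℝ) * (x.2 : ℝ) := by rw [← hx.1]; push_cast; ring
            rw [this, Real.mul_rpow (Nat.cast_nonneg _) (Nat.cast_nonneg _)]
          rw [hsum, card_divisorsAntidiagonal]
          refine mul_le_mul_of_nonneg_right ?_ (Real.rpow_nonneg (Nat.cast_nonneg _) _)
          exact_mod_cast two_pow_omega_le_card_divisors hm
    _ = ∑ x ∈ (range N).biUnion (fun m => m.divisorsAntidiagonal), F x := by
        refine (Finset.sum_biUnion ?_).symm
        intro a _ b _ hab
        refine Finset.disjoint_left.mpr fun x hxa hxb => hab ?_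
        rw [Nat.mem_divisorsAntidiagonal] at hxa hxb
        rw [← hxa.1, ← hxb.1]
    _ ≤ ∑' x, F x := Summable.sum_le_tsum _ (fun x _ => hFnn x) hF

open Classical in
/-- The function `m ↦ 2^{ω(m)} m^{-s}` restricted to integers with all prime factors in `S`. -/
noncomputable def epf (S : Set ℕ) (s : ℝ) (m : ℕ) : ℝ :=
  if 0 < m ∧ ∀ p : ℕ, p.Prime → p ∣ m → p ∈ S then
    2 ^ m.primeFactors.card * (m : ℝ) ^ (-s) else 0

lemma epf_one (S : Set ℕ) (s : ℝ) : epf S s 1 = 1 := by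
  rw [epf, if_pos ⟨one_pos, fun p hp hd => absurd (Nat.dvd_one.mp hd) hp.ne_one⟩]
  simp

lemma epf_zero (S : Set ℕ) (s : ℝ) : epf S s 0 = 0 := by
  rw [epf, if_neg (by simp)]

lemma epf_mul (S : Set ℕ) (s : ℝ) {m n : ℕ} (hmn : Nat.Coprime m n) :
    epf S s (m * n) = epf S s m * epf S s n := by
  have hcond : (0 < m * n ∧ ∀ p : ℕ, p.Prime → p ∣ m * n → p ∈ S) ↔
      ((0 < m ∧ ∀ p : ℕ, p.Prime → p ∣ m → p ∈ S) ∧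
       (0 < n ∧ ∀ p : ℕ, p.Prime → p ∣ n → p ∈ S)) := by
    constructor
    · rintro ⟨hpos, hp⟩
      have hm : 0 < m := Nat.pos_of_mul_pos_left (by rwa [mul_comm] at hpos)
      have hn : 0 < n := Nat.pos_of_mul_pos_left hpos
      exact ⟨⟨hm, fun p hp' hd => hp p hp' (hd.mul_right n)⟩,
             ⟨hn, fun p hp' hd => hp p hp' (hd.mul_left m)⟩⟩
    · rintro ⟨⟨hm, hpm⟩, ⟨hn, hpn⟩⟩
      refine ⟨Nat.mul_pos hm hn, fun p hp' hd => ?_⟩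
      rcases (Nat.Prime.dvd_mul hp').mp hd with h | h
      · exact hpm p hp' h
      · exact hpn p hp' h
  by_cases h : (0 < m ∧ ∀ p : ℕ, p.Prime → p ∣ m → p ∈ S) ∧
      (0 < n ∧ ∀ p : ℕ, p.Prime → p ∣ n → p ∈ S)
  · rw [epf, epf, epf, if_pos (hcond.mpr h), if_pos h.1, if_pos h.2]
    have hω : (m * n).primeFactors.card = m.primeFactors.card + n.primeFactors.card := by
      rw [Nat.Coprime.primeFactors_mul hmn,
        Finset.card_union_of_disjoint (Nat.Coprime.disjoint_primeFactors hmn)]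
    have hr : ((m * n : ℕ) : ℝ) ^ (-s) = (m : ℝ) ^ (-s) * (n : ℝ) ^ (-s) := by
      push_cast
      rw [Real.mul_rpow (Nat.cast_nonneg _) (Nat.cast_nonneg _)]
    rw [hω, pow_add, hr]; ring
  · rw [epf, epf, epf, if_neg (fun hc => h (hcond.mp hc))]
    rcases not_and_or.mp h with h' | h'
    · rw [if_neg h', zero_mul]
    · rw [if_neg h', mul_zero]

lemma epf_prime_pow (S : Set ℕ) (s : ℝ) {p : ℕ} (hp : p.Prime) (hpS : p ∈ S) (e : ℕ) :
    epf S s (p ^ e) = if e = 0 then 1 else 2 * ((p : ℝ) ^ (-s)) ^ e := by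
  have hcond : 0 < p ^ e ∧ ∀ q : ℕ, q.Prime → q ∣ p ^ e → q ∈ S := by
    refine ⟨Nat.pow_pos (n := e) hp.pos, fun q hq hd => ?_⟩
    have : q = p := (Nat.prime_dvd_prime_iff_eq hq hp).mp (hq.dvd_of_dvd_pow hd)
    rwa [this]
  rw [epf, if_pos hcond]
  rcases eq_or_ne e 0 with rfl | he
  · simp
  · rw [if_neg he, Nat.primeFactors_pow p he, hp.primeFactors, Finset.card_singleton, pow_one]
    congr 1
    push_cast
    rw [← Real.rpow_natCast (p : ℝ) e, ← Real.rpow_mul (Nat.cast_nonneg _), mul_comm,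
      Real.rpow_mul (Nat.cast_nonneg _), Real.rpow_natCast]

lemma epf_prime_pow_not_mem (S : Set ℕ) (s : ℝ) {p : ℕ} (hp : p.Prime) (hpS : p ∉ S) (e : ℕ) :
    epf S s (p ^ e) = if e = 0 then 1 else 0 := by
  rcases eq_or_ne e 0 with rfl | he
  · simpa using epf_one S s
  · rw [if_neg he, epf, if_neg]
    rintro ⟨-, hall⟩
    exact hpS (hall p hp (dvd_pow_self p he))

lemma hasSum_epf_prime_mem (S : Set ℕ) {s : ℝ} (hs : 1 < s) {p : ℕ} (hp : p.Prime)
    (hpS : p ∈ S) :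
    HasSum (fun e : ℕ => epf S s (p ^ e))
      ((1 + (p : ℝ) ^ (-s)) / (1 - (p : ℝ) ^ (-s))) := by
  set x : ℝ := (p : ℝ) ^ (-s) with hxdef
  have hx0 : 0 ≤ x := Real.rpow_nonneg (Nat.cast_nonneg _) _
  have hx1 : x < 1 := by
    refine Real.rpow_lt_one_of_one_lt_of_neg ?_ (by linarith)
    exact_mod_cast hp.one_lt
  have hne : 1 - x ≠ 0 := by linarith
  have key : HasSum (fun e : ℕ => epf S s (p ^ (e + 1))) (2 * (x * (1 - x)⁻¹)) := by
    have h := ((hasSum_geometric_of_lt_one hx0 hx1).mul_left x).mul_left 2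
    have heq : (fun e : ℕ => epf S s (p ^ (e + 1))) = fun e => 2 * (x * x ^ e) := by
      funext e
      rw [epf_prime_pow S s hp hpS (e + 1), if_neg (Nat.succ_ne_zero e), pow_succ]
      ring
    rw [heq]; exact h
  have h2 := (hasSum_nat_add_iff (f := fun e : ℕ => epf S s (p ^ e)) 1).mp key
  have h3 : 2 * (x * (1 - x)⁻¹) + ∑ i ∈ Finset.range 1, epf S s (p ^ i)
      = (1 + x) / (1 - x) := by
    rw [Finset.sum_range_one, pow_zero, epf_one]
    field_simp
    ring
  rwa [h3] at h2

lemma hasSum_epf_prime_not_mem (S : Set ℕ) (s : ℝ) {p : ℕ} (hp : p.Prime) (hpS : p ∉ S) :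
    HasSum (fun e : ℕ => epf S s (p ^ e)) 1 := by
  have heq : (fun e : ℕ => epf S s (p ^ e))
      = fun e : ℕ => if e = 0 then (1 : ℝ) else 0 := by
    funext e; exact epf_prime_pow_not_mem S s hp hpS e
  rw [heq]
  exact hasSum_ite_eq 0 1

lemma epf_summable_norm (S : Set ℕ) {s : ℝ} (hs : 1 < s) :
    Summable (fun n : ℕ => ‖epf S s n‖) := by
  refine Summable.of_nonneg_of_le (fun n => norm_nonneg _) (fun n => ?_) (aux_summable s hs)
  rw [Real.norm_eq_abs, epf]
  split
  · rw [abs_of_nonneg (by positivity)]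
  · rw [abs_zero]
    positivity

/-- Dirichlet's Euler-product identity: for a set `S` of primes and real `s > 1`,
the family `m ↦ 2^{ω(m)} / m^s` over positive integers `m` whose prime factors all
lie in `S` is summable, the product over `p ∈ S` of `(1 + p⁻ˢ)/(1 − p⁻ˢ)` converges,
and the sum equals the product. -/
theorem dirichlet_euler_product (S : Set ℕ) (hS : ∀ p ∈ S, p.Prime)
    (s : ℝ) (hs : 1 < s) :
    Summable (fun m : {m : ℕ // 0 < m ∧ ∀ p : ℕ, p.Prime → p ∣ m → p ∈ S} =>
      (2 : ℝ) ^ (m.1.primeFactors.card) / (m.1 : ℝ) ^ s) ∧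
    Multipliable (fun p : S => (1 + (p.1 : ℝ) ^ (-s)) / (1 - (p.1 : ℝ) ^ (-s))) ∧
    (∑' m : {m : ℕ // 0 < m ∧ ∀ p : ℕ, p.Prime → p ∣ m → p ∈ S},
        (2 : ℝ) ^ (m.1.primeFactors.card) / (m.1 : ℝ) ^ s) =
      ∏' p : S, (1 + (p.1 : ℝ) ^ (-s)) / (1 - (p.1 : ℝ) ^ (-s)) := by
  classical
  set A : Set ℕ := {m | 0 < m ∧ ∀ p : ℕ, p.Prime → p ∣ m → p ∈ S} with hA
  have hval : ∀ m ∈ A, epf S s m = (2 : ℝ) ^ m.primeFactors.card / (m : ℝ) ^ s := by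
    intro m hm
    have hm' : 0 < m ∧ ∀ p : ℕ, p.Prime → p ∣ m → p ∈ S := hm
    rw [epf, if_pos hm', Real.rpow_neg (Nat.cast_nonneg _), div_eq_mul_inv]
  -- the Euler product over all primes
  have HP : HasProd (fun p : Nat.Primes => ∑' e : ℕ, epf S s (p.1 ^ e)) (∑' n, epf S s n) :=
    EulerProduct.eulerProduct_hasProd (epf_one S s) (fun {m n} h => epf_mul S s h)
      (epf_summable_norm S hs) (epf_zero S s)
  set P : Nat.Primes → ℝ := fun p => ∑' e : ℕ, epf S s (p.1 ^ e) with hP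
  have hsupp : Function.mulSupport P ⊆ {p : Nat.Primes | p.1 ∈ S} := by
    intro p hp
    by_contra hpS
    exact hp ((hasSum_epf_prime_not_mem S s p.2 hpS).tsum_eq)
  have h1 : HasProd (fun q : {p : Nat.Primes | p.1 ∈ S} => P q.1) (∑' n, epf S s n) :=
    (hasProd_subtype_iff_of_mulSupport_subset hsupp).mpr HP
  let e : S ≃ {p : Nat.Primes | p.1 ∈ S} :=
    { toFun := fun q => ⟨⟨q.1, hS q.1 q.2⟩, q.2⟩
      invFun := fun q => ⟨q.1.1, q.2⟩
      left_inv := fun q => rfl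
      right_inv := fun q => rfl }
  have HPS : HasProd (fun q : S => (1 + (q.1 : ℝ) ^ (-s)) / (1 - (q.1 : ℝ) ^ (-s)))
      (∑' n, epf S s n) := by
    have h2 := (Equiv.hasProd_iff e (f := fun q : {p : Nat.Primes | p.1 ∈ S} => P q.1)).mpr h1
    have hfun : ((fun q : {p : Nat.Primes | p.1 ∈ S} => P q.1) ∘ e)
        = fun q : S => (1 + (q.1 : ℝ) ^ (-s)) / (1 - (q.1 : ℝ) ^ (-s)) := by
      funext q
      exact (hasSum_epf_prime_mem S hs (hS q.1 q.2) q.2).tsum_eq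
    rwa [hfun] at h2
  have hindicator : epf S s = A.indicator
      (fun m : ℕ => (2 : ℝ) ^ m.primeFactors.card / (m : ℝ) ^ s) := by
    funext m
    by_cases hm : m ∈ A
    · rw [Set.indicator_of_mem hm, hval m hm]
    · have hm' : ¬(0 < m ∧ ∀ p : ℕ, p.Prime → p ∣ m → p ∈ S) := hm
      rw [Set.indicator_of_notMem hm, epf, if_neg hm']
  have htsum : (∑' m : {m : ℕ // 0 < m ∧ ∀ p : ℕ, p.Prime → p ∣ m → p ∈ S},
      (2 : ℝ) ^ (m.1.primeFactors.card) / (m.1 : ℝ) ^ s) = ∑' n, epf S s n := by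
    rw [hindicator, ← tsum_subtype A (fun m : ℕ => (2 : ℝ) ^ m.primeFactors.card / (m : ℝ) ^ s)]
    rfl
  refine ⟨?_, HPS.multipliable, htsum.trans HPS.tprod_eq.symm⟩
  have hsub : Summable (fun m : {m : ℕ // m ∈ A} => epf S s m.1) :=
    ((epf_summable_norm S hs).of_norm).subtype A
  exact hsub.congr fun m => hval m.1 m.2
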